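/- Let $p \in \mathbb{S}^2$, let $H \in \mathrm{SO}(3)$, $\phi \in [0,2\pi)$, and for $j = 1,\ldots,s$ set $O_j = H R(2\pi j/s + \phi)$, where $R(\psi)$ is the rotation by angle $\psi$ about the $z$-axis. Then $\sum_{i \neq j} \log \|O_i - O_j\|_F = \frac{s(s-1)}{2}\log 2 + s \log s$. -/

import Mathlib

open Real Finset Matrix

/-- The rotation by angle `ψ` about the `z`-axis. -/
noncomputable def rotZ (ψ : ℝ) : Matrix (Fin 3) (Fin 3) ℝ :=
  !![Real.cos ψ, -Real.sin ψ, 0; Real.sin ψ, Real.cos ψ, 0; 0, 0, 1]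

private lemma trace_aux (H : Matrix (Fin 3) (Fin 3) ℝ) (hH : H * Hᵀ = 1) (a b : ℝ) :
    Matrix.trace ((H * rotZ a - H * rotZ b)ᵀ * (H * rotZ a - H * rotZ b))
      = 4 - 4 * Real.cos (a - b) := by
  have hH' : Hᵀ * H = 1 := mul_eq_one_comm.mp hH
  rw [← Matrix.mul_sub, Matrix.transpose_mul, Matrix.mul_assoc, ← Matrix.mul_assoc Hᵀ,
    hH', Matrix.one_mul]
  have h1 := Real.sin_sq_add_cos_sq a
  have h2 := Real.sin_sq_add_cos_sq b
  simp [rotZ, Matrix.trace, Matrix.mul_apply, Fin.sum_univ_succ, Matrix.diag,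
    Real.cos_sub]
  nlinarith [h1, h2]

private lemma sqrt_aux (x : ℝ) :
    Real.sqrt (4 - 4 * Real.cos x) = 2 * Real.sqrt 2 * |Real.sin (x / 2)| := by
  rw [Real.abs_sin_half]
  rw [show (4 - 4 * Real.cos x : ℝ) = 8 * ((1 - Real.cos x) / 2) by ring,
    Real.sqrt_mul (by norm_num), show (8 : ℝ) = 2 ^ 2 * 2 by norm_num,
    Real.sqrt_mul (by positivity), Real.sqrt_sq (by norm_num)]

private lemma abs_sin_aux (x : ℝ) (k : ℤ) : |Real.sin (x + k * π)| = |Real.sin x| := by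
  rw [Real.sin_add_int_mul_pi, abs_mul]
  rcases Int.even_or_odd k with h | h
  · rw [h.neg_one_zpow]; norm_num
  · rw [Odd.neg_one_zpow h]; norm_num

private lemma prodsin_aux (m : ℕ) :
    ∏ k ∈ Finset.range m, (2 * Real.sin (π * (k + 1) / (m + 1))) = (m + 1 : ℝ) := by
  have hprim := Complex.isPrimitiveRoot_exp (m + 1) (Nat.succ_ne_zero m)
  have h := hprim.prod_one_sub_pow_eq_order
  have habs := congrArg (‖·‖) h
  rw [norm_prod] at habs
  have hterm : ∀ k ∈ Finset.range m,
      ‖(1 - Complex.exp (2 * π * Complex.I / ((m + 1 : ℕ) : ℂ)) ^ (k + 1))‖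
        = 2 * Real.sin (π * (k + 1) / (m + 1)) := by
    intro k hk
    rw [← Complex.exp_nat_mul]
    have hcast : ((k + 1 : ℕ) : ℂ) * (2 * π * Complex.I / ((m + 1 : ℕ) : ℂ)) =
        ((2 * π * (k + 1) / (m + 1) : ℝ) : ℂ) * Complex.I := by
      push_cast; ring
    rw [hcast, Complex.exp_mul_I]
    set θ : ℝ := 2 * π * (k + 1) / (m + 1) with hθ
    have hre : (1 - (Complex.cos θ + Complex.sin θ * Complex.I)) =
        Complex.ofReal (1 - Real.cos θ) + Complex.ofReal (-Real.sin θ) * Complex.I := by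
      simp [Complex.ext_iff]
    rw [hre, Complex.norm_def, Complex.normSq_add_mul_I]
    have hsin : Real.sin (θ / 2) = Real.sin (π * (k + 1) / (m + 1)) := by
      congr 1; rw [hθ]; ring
    have h4 : (1 - Real.cos θ) ^ 2 + (-Real.sin θ) ^ 2 = 2 ^ 2 * ((1 - Real.cos θ) / 2) := by
      nlinarith [Real.sin_sq_add_cos_sq θ]
    rw [h4, Real.sqrt_mul (by positivity), Real.sqrt_sq (by norm_num), ← Real.abs_sin_half,
      hsin, abs_of_nonneg]
    apply Real.sin_nonneg_of_nonneg_of_le_pi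
    · positivity
    · rw [div_le_iff₀ (by positivity)]
      have hk' : (k : ℝ) + 1 ≤ (m : ℝ) + 1 := by
        have := Finset.mem_range.mp hk
        have : (k : ℝ) ≤ (m : ℝ) := by exact_mod_cast this.le
        linarith
      nlinarith [Real.pi_pos, hk']
  rw [Finset.prod_congr rfl hterm] at habs
  rw [habs]
  rw [show ((m : ℂ) + 1) = ((m + 1 : ℕ) : ℂ) by push_cast; ring, Complex.norm_natCast]
  push_cast
  ring

private lemma cast_inj_Icc (s a b : ℕ) (ha : a ∈ Finset.Icc 1 s) (hb : b ∈ Finset.Icc 1 s)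
    (h : (a : ZMod s) = b) : a = b := by
  rw [ZMod.natCast_eq_natCast_iff] at h
  have h1 : a % s = b % s := h
  simp only [Finset.mem_Icc] at ha hb
  rcases eq_or_lt_of_le ha.2 with rfl | ha'
  · rcases eq_or_lt_of_le hb.2 with rfl | hb'
    · rfl
    · rw [Nat.mod_self, Nat.mod_eq_of_lt hb'] at h1; omega
  · rcases eq_or_lt_of_le hb.2 with rfl | hb'
    · rw [Nat.mod_self, Nat.mod_eq_of_lt ha'] at h1; omega
    · rw [Nat.mod_eq_of_lt ha', Nat.mod_eq_of_lt hb'] at h1; omega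

private lemma abs_sin_mod_aux (s i j : ℕ) (d : ℕ)
    (hd : ((d : ℤ) : ZMod s) = ((j : ℤ) : ZMod s) - ((i : ℤ) : ZMod s)) :
    |Real.sin (π * i / s - π * j / s)| = |Real.sin (π * d / s)| := by
  rcases Nat.eq_zero_or_pos s with rfl | hs
  · simp
  have hdvd : (s : ℤ) ∣ ((j : ℤ) - i - d) := by
    rw [← ZMod.intCast_zmod_eq_zero_iff_dvd]
    push_cast at hd ⊢
    rw [hd]; ring
  obtain ⟨k, hk⟩ := hdvd
  have hsne : (s : ℝ) ≠ 0 := by positivity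
  have key : π * d / s = (π * j / s - π * i / s) + ((-k : ℤ) : ℝ) * π := by
    have hkR : ((j : ℝ) - i - d) = s * k := by exact_mod_cast hk
    field_simp
    push_cast
    linear_combination (-1 : ℝ) * hkR
  rw [key, abs_sin_aux,
    show π * i / s - π * j / s = -(π * j / s - π * i / s) by ring, Real.sin_neg, abs_neg]

/-- For `s` equally spaced rotation matrices `O_j = H · R(2πj/s + φ)` with
`H ∈ SO(3)`, the sum of logarithms of mutual Frobenius distances equals
`(s(s-1)/2) log 2 + s log s`. -/
theorem sum_log_dist_equally_spaced (s : ℕ) (hs : 1 ≤ s)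
    (H : Matrix (Fin 3) (Fin 3) ℝ) (hH : H * Hᵀ = 1) (hdet : H.det = 1)
    (φ : ℝ) (hφ : φ ∈ Set.Ico 0 (2 * π))
    (O : ℕ → Matrix (Fin 3) (Fin 3) ℝ)
    (hO : ∀ j, O j = H * rotZ (2 * π * j / s + φ)) :
    ∑ i ∈ Finset.Icc 1 s, ∑ j ∈ (Finset.Icc 1 s).erase i,
        Real.log (Real.sqrt (Matrix.trace ((O i - O j)ᵀ * (O i - O j))))
      = (s : ℝ) * ((s : ℝ) - 1) / 2 * Real.log 2 + (s : ℝ) * Real.log s := by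
  haveI : NeZero s := ⟨by omega⟩
  have hsR : (0 : ℝ) < s := by exact_mod_cast hs
  set g : ZMod s → ℝ := fun x => Real.log |Real.sin (π * x.val / s)| with hg
  -- Step 1: rewrite each summand
  have hsummand : ∀ i ∈ Finset.Icc 1 s, ∀ j ∈ (Finset.Icc 1 s).erase i,
      Real.log (Real.sqrt (Matrix.trace ((O i - O j)ᵀ * (O i - O j))))
        = 3 / 2 * Real.log 2 + g ((j : ZMod s) - (i : ZMod s)) := by
    intro i hi j hj
    obtain ⟨hij, hjIcc⟩ := Finset.mem_erase.mp hj
    have hne : ((j : ZMod s)) ≠ (i : ZMod s) := fun h => hij (cast_inj_Icc s j i hjIcc hi h)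
    set x : ZMod s := (j : ZMod s) - (i : ZMod s) with hx
    have hx0 : x ≠ 0 := sub_ne_zero.mpr hne
    have hv1 : 1 ≤ x.val := Nat.one_le_iff_ne_zero.mpr
      (fun h => hx0 (by rwa [← ZMod.val_eq_zero]))
    have hvs : x.val < s := ZMod.val_lt x
    have hsinpos : 0 < Real.sin (π * x.val / s) := by
      apply Real.sin_pos_of_pos_of_lt_pi
      · have : (1 : ℝ) ≤ (x.val : ℝ) := by exact_mod_cast hv1
        have := Real.pi_pos
        positivity
      · rw [div_lt_iff₀ hsR]
        have : (x.val : ℝ) < s := by exact_mod_cast hvs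
        nlinarith [Real.pi_pos]
    have habs : |Real.sin (π * i / s - π * j / s)| = |Real.sin (π * x.val / s)| := by
      apply abs_sin_mod_aux
      push_cast
      simp [hx, ZMod.natCast_val, ZMod.cast_id]
    rw [hO i, hO j, trace_aux H hH, sqrt_aux,
      show (2 * π * i / s + φ - (2 * π * j / s + φ)) / 2 = π * i / s - π * j / s by ring,
      habs, Real.log_mul (by positivity) (by positivity),
      Real.log_mul (by norm_num) (by positivity), Real.log_sqrt (by norm_num)]
    rw [hg]
    ring
  rw [Finset.sum_congr rfl (fun i hi => Finset.sum_congr rfl (hsummand i hi))]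
  -- Step 2: inner sum over j equals sum over nonzero residues
  have hinner : ∀ i ∈ Finset.Icc 1 s,
      ∑ j ∈ (Finset.Icc 1 s).erase i, (3 / 2 * Real.log 2 + g ((j : ZMod s) - (i : ZMod s)))
        = ∑ x ∈ (Finset.univ : Finset (ZMod s)).erase 0, (3 / 2 * Real.log 2 + g x) := by
    intro i hi
    refine Finset.sum_bij' (fun j _ => (j : ZMod s) - (i : ZMod s))
      (fun x _ => if ((x + (i : ZMod s)).val = 0) then s else (x + (i : ZMod s)).val)
      ?_ ?_ ?_ ?_ ?_
    · intro j hj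
      obtain ⟨hij, hjIcc⟩ := Finset.mem_erase.mp hj
      exact Finset.mem_erase.mpr ⟨sub_ne_zero.mpr
        (fun h => hij (cast_inj_Icc s j i hjIcc hi h)), Finset.mem_univ _⟩
    · intro x hx
      obtain ⟨hx0, -⟩ := Finset.mem_erase.mp hx
      have hmem : (if ((x + (i : ZMod s)).val = 0) then s else (x + (i : ZMod s)).val)
          ∈ Finset.Icc 1 s := by
        split_ifs with h
        · exact Finset.mem_Icc.mpr ⟨hs, le_rfl⟩
        · exact Finset.mem_Icc.mpr ⟨Nat.one_le_iff_ne_zero.mpr h, (ZMod.val_lt _).le⟩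
      refine Finset.mem_erase.mpr ⟨?_, hmem⟩
      intro hcontra
      apply hx0
      have hcast : (((if ((x + (i : ZMod s)).val = 0) then s
          else (x + (i : ZMod s)).val : ℕ)) : ZMod s) = x + (i : ZMod s) := by
        split_ifs with h
        · rw [ZMod.natCast_self]
          exact ((ZMod.val_eq_zero _).mp h).symm
        · simp [ZMod.natCast_val, ZMod.cast_id]
      rw [hcontra] at hcast
      have := hcast.symm
      rwa [add_eq_right] at this
    · -- left inverse
      intro j hj
      obtain ⟨hij, hjIcc⟩ := Finset.mem_erase.mp hj
      have hj1 : 1 ≤ j := (Finset.mem_Icc.mp hjIcc).1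
      have hjs : j ≤ s := (Finset.mem_Icc.mp hjIcc).2
      rw [sub_add_cancel]
      rcases eq_or_lt_of_le hjs with rfl | hjlt
      · simp [ZMod.natCast_self, ZMod.val_zero]
      · rw [ZMod.val_cast_of_lt hjlt]
        simp [Nat.one_le_iff_ne_zero.mp hj1]
    · -- right inverse
      intro x hx
      have hcast : (((if ((x + (i : ZMod s)).val = 0) then s
          else (x + (i : ZMod s)).val : ℕ)) : ZMod s) = x + (i : ZMod s) := by
        split_ifs with h
        · rw [ZMod.natCast_self]
          exact ((ZMod.val_eq_zero _).mp h).symm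
        · simp [ZMod.natCast_val, ZMod.cast_id]
      rw [hcast, add_sub_cancel_right]
    · intro j hj
      rfl
  rw [Finset.sum_congr rfl hinner, Finset.sum_const, Nat.card_Icc]
  -- Step 3: compute the sum over nonzero residues
  have hzsum : ∑ x ∈ (Finset.univ : Finset (ZMod s)).erase 0, g x
      = Real.log s - ((s : ℝ) - 1) * Real.log 2 := by
    have hbij : ∑ x ∈ (Finset.univ : Finset (ZMod s)).erase 0, g x
        = ∑ k ∈ Finset.range (s - 1), g (((k + 1 : ℕ) : ZMod s)) := by
      refine Finset.sum_bij' (fun x _ => x.val - 1) (fun k _ => ((k + 1 : ℕ) : ZMod s))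
        ?_ ?_ ?_ ?_ ?_
      · intro x hx
        obtain ⟨hx0, -⟩ := Finset.mem_erase.mp hx
        have hv1 : 1 ≤ x.val := Nat.one_le_iff_ne_zero.mpr
          (fun h => hx0 (by rwa [← ZMod.val_eq_zero]))
        have := ZMod.val_lt x
        exact Finset.mem_range.mpr (by omega)
      · intro k hk
        have hk' := Finset.mem_range.mp hk
        refine Finset.mem_erase.mpr ⟨?_, Finset.mem_univ _⟩
        intro h
        have h0 : ((k + 1 : ℕ) : ZMod s).val = 0 := by rw [h]; exact ZMod.val_zero
        rw [ZMod.val_cast_of_lt (by omega)] at h0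
        omega
      · intro x hx
        obtain ⟨hx0, -⟩ := Finset.mem_erase.mp hx
        have hv1 : 1 ≤ x.val := Nat.one_le_iff_ne_zero.mpr
          (fun h => hx0 (by rwa [← ZMod.val_eq_zero]))
        rw [show x.val - 1 + 1 = x.val by omega]
        simp [ZMod.natCast_val, ZMod.cast_id]
      · intro k hk
        have hk' := Finset.mem_range.mp hk
        rw [ZMod.val_cast_of_lt (by omega)]
        omega
      · intro x hx
        obtain ⟨hx0, -⟩ := Finset.mem_erase.mp hx
        have hv1 : 1 ≤ x.val := Nat.one_le_iff_ne_zero.mpr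
          (fun h => hx0 (by rwa [← ZMod.val_eq_zero]))
        congr 1
        rw [show x.val - 1 + 1 = x.val by omega]
        simp [ZMod.natCast_val, ZMod.cast_id]
    rw [hbij]
    have hterm : ∀ k ∈ Finset.range (s - 1),
        g (((k + 1 : ℕ) : ZMod s)) = Real.log (2 * Real.sin (π * (k + 1) / s)) - Real.log 2 := by
      intro k hk
      have hk' := Finset.mem_range.mp hk
      have hval : ((k + 1 : ℕ) : ZMod s).val = k + 1 := ZMod.val_cast_of_lt (by omega)
      have hsinpos : 0 < Real.sin (π * (k + 1) / s) := by
        apply Real.sin_pos_of_pos_of_lt_pi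
        · have := Real.pi_pos; positivity
        · rw [div_lt_iff₀ hsR]
          have hlt : ((k : ℝ) + 1) < s := by
            have h1 : k + 1 < s := by omega
            exact_mod_cast h1
          nlinarith [Real.pi_pos]
      rw [hg]
      simp only [hval]
      rw [abs_of_pos (by push_cast; exact hsinpos)]
      rw [Real.log_mul (by norm_num) (by push_cast; positivity)]
      push_cast
      ring
    rw [Finset.sum_congr rfl hterm, Finset.sum_sub_distrib, Finset.sum_const, Finset.card_range]
    simp only [nsmul_eq_mul]
    have hlogprod : ∑ k ∈ Finset.range (s - 1), Real.log (2 * Real.sin (π * (k + 1) / s))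
        = Real.log s := by
      rw [← Real.log_prod]
      · have := prodsin_aux (s - 1)
        rw [show ((s - 1 : ℕ) : ℝ) + 1 = (s : ℝ) by
          have : (1:ℕ) ≤ s := hs
          push_cast [Nat.cast_sub this]; ring] at this
        rw [this]
      · intro k hk
        have hk' := Finset.mem_range.mp hk
        have hsinpos : 0 < Real.sin (π * (k + 1) / s) := by
          apply Real.sin_pos_of_pos_of_lt_pi
          · have := Real.pi_pos; positivity
          · rw [div_lt_iff₀ hsR]
            have hlt : ((k : ℝ) + 1) < s := by
              have h1 : k + 1 < s := by omega
              exact_mod_cast h1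
            nlinarith [Real.pi_pos]
        positivity
    rw [hlogprod]
    have hcard : ((s - 1 : ℕ) : ℝ) = (s : ℝ) - 1 := by
      have : (1:ℕ) ≤ s := hs
      push_cast [Nat.cast_sub this]; ring
    rw [hcard]
  -- Step 4: put it all together
  rw [Finset.sum_add_distrib, Finset.sum_const, Finset.card_erase_of_mem (Finset.mem_univ _),
    Finset.card_univ, ZMod.card, hzsum]
  simp only [nsmul_eq_mul]
  have hcast : ((s - 1 : ℕ) : ℝ) = (s : ℝ) - 1 := by
    push_cast [Nat.cast_sub hs]; ring
  rw [show s + 1 - 1 = s by omega, hcast]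
  ring
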